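/- Suppose X_1, ..., X_r is a Tverberg partition of X (the constructed set) with x^i ∈ X_i for all i. Then for every 1 ≤ i ≤ r and 1 ≤ j ≤ d: |X_i ∩ A_j| = 0 if i = i(j), and |X_i ∩ A_j| = 1 otherwise. In particular |X_i| = a_i for all i. -/
import Mathlib


open Finset Set

/-- The standard basis vector `e^j` of `ℝ^d`. -/
noncomputable def stdVec (d : ℕ) (j : Fin d) : Fin d → ℝ := Pi.single j 1

/-- The set `A_j = {e^j, 2e^j, ..., (r-1)e^j}`. -/
def Aset (d r : ℕ) (j : Fin d) : Set (Fin d → ℝ) :=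
  {v | ∃ k : ℕ, 1 ≤ k ∧ k ≤ r - 1 ∧ v = (k : ℝ) • stdVec d j}

/-- The point `x^i`, with `x^i_j = 0` if `i = i(j)` and `x^i_j = -i` otherwise
(indices taken in `{1,...,r}`, so `Fin r` index `i` corresponds to `i+1`). -/
def xpt (d r : ℕ) (ι : Fin d → Fin r) (i : Fin r) : Fin d → ℝ :=
  fun j => if ι j = i then 0 else -((i : ℕ) + 1 : ℝ)

/-- The set `A = {x^1, ..., x^r}`. -/
def Apts (d r : ℕ) (ι : Fin d → Fin r) : Set (Fin d → ℝ) := Set.range (xpt d r ι)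

/-- The constructed set `X = A ∪ A_1 ∪ ⋯ ∪ A_d`. -/
def Xset (d r : ℕ) (ι : Fin d → Fin r) : Set (Fin d → ℝ) :=
  Apts d r ι ∪ ⋃ j, Aset d r j

/-- `P : Fin r → Set (Fin d → ℝ)` is a Tverberg partition of `X`:
a partition of `X` into pairwise disjoint parts whose convex hulls share a point. -/
def IsTverbergPartition (d r : ℕ) (X : Set (Fin d → ℝ))
    (P : Fin r → Set (Fin d → ℝ)) : Prop :=
  (⋃ i, P i) = X ∧ (∀ i i', i ≠ i' → Disjoint (P i) (P i')) ∧
    ∃ p : Fin d → ℝ, ∀ i, p ∈ convexHull ℝ (P i)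

lemma sv_apply (d : ℕ) (k : ℕ) (j j' : Fin d) :
    ((k : ℝ) • stdVec d j) j' = if j' = j then (k : ℝ) else 0 := by
  simp [stdVec, Pi.single_apply]

open scoped Classical in
noncomputable def Afin (d r : ℕ) (j : Fin d) : Finset (Fin d → ℝ) :=
  (Finset.Icc 1 (r-1)).image (fun k : ℕ => (k : ℝ) • stdVec d j)

lemma mem_Afin {d r : ℕ} {j : Fin d} {v : Fin d → ℝ} :
    v ∈ Afin d r j ↔ ∃ k : ℕ, 1 ≤ k ∧ k ≤ r - 1 ∧ v = (k : ℝ) • stdVec d j := by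
  simp [Afin, eq_comm, and_assoc]

lemma coe_Afin (d r : ℕ) (j : Fin d) : (↑(Afin d r j) : Set (Fin d → ℝ)) = Aset d r j := by
  ext v; simp [mem_Afin, Aset]

lemma sv_inj {d : ℕ} {j j' : Fin d} {k k' : ℕ} (hk : 1 ≤ k)
    (h : (k : ℝ) • stdVec d j = (k' : ℝ) • stdVec d j') : k = k' ∧ j = j' := by
  have h1 := congrFun h j
  have h2 := congrFun h j'
  rw [sv_apply, sv_apply] at h1
  rw [sv_apply, sv_apply] at h2
  simp at h1 h2
  by_cases hjj : j = j'
  · subst hjj; simp at h1; exact ⟨Nat.cast_injective h1, rfl⟩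
  · exfalso
    rw [if_neg hjj] at h1
    norm_cast at h1
    omega

lemma card_Afin (d r : ℕ) (j : Fin d) : (Afin d r j).card = r - 1 := by
  classical
  rw [Afin, Finset.card_image_of_injOn (by
    intro k hk k' hk' h
    simp only [Finset.mem_coe, Finset.mem_Icc] at hk
    exact (sv_inj hk.1 h).1), Nat.card_Icc]
  omega

lemma xpt_nonpos (d r : ℕ) (ι : Fin d → Fin r) (i : Fin r) (j : Fin d) :
    xpt d r ι i j ≤ 0 := by
  unfold xpt
  split
  · exact le_refl _
  · have : (0:ℝ) ≤ (i:ℕ) + 1 := by positivity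
    linarith

lemma Afin_apply_nonneg {d r : ℕ} {j j' : Fin d} {y : Fin d → ℝ}
    (h : y ∈ Afin d r j') : 0 ≤ y j := by
  obtain ⟨k, hk1, hk2, rfl⟩ := mem_Afin.1 h
  rw [sv_apply]; split <;> [positivity; rfl]

lemma Afin_apply_ne {d r : ℕ} {j j' : Fin d} {y : Fin d → ℝ}
    (h : y ∈ Afin d r j') (hjj : j ≠ j') : y j = 0 := by
  obtain ⟨k, hk1, hk2, rfl⟩ := mem_Afin.1 h
  rw [sv_apply, if_neg hjj]

lemma Afin_apply_self {d r : ℕ} {j' : Fin d} {y : Fin d → ℝ}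
    (h : y ∈ Afin d r j') : 1 ≤ y j' := by
  obtain ⟨k, hk1, hk2, rfl⟩ := mem_Afin.1 h
  rw [sv_apply, if_pos rfl]
  exact_mod_cast hk1

/-- Corollary 3.3: if `X_1,...,X_r` is a Tverberg partition of the constructed set
with `x^i ∈ X_i` for all `i`, then `|X_i ∩ A_j| = 0` if `i = i(j)` and `= 1`
otherwise; in particular `|X_i| = a_i`. -/
theorem part_meets_Aj (d r : ℕ) (hd : 1 ≤ d) (hr : 1 ≤ r)
    (a : Fin r → ℕ) (hpos : ∀ i, 1 ≤ a i) (hle : ∀ i, a i ≤ d + 1)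
    (hsum : ∑ i, a i = (d + 1) * (r - 1) + 1)
    (ι : Fin d → Fin r)
    (hι : ∀ i, (Finset.univ.filter fun j => ι j = i).card = d + 1 - a i)
    (P : Fin r → Set (Fin d → ℝ))
    (hTP : IsTverbergPartition d r (Xset d r ι) P)
    (hx : ∀ i, xpt d r ι i ∈ P i) :
    (∀ i, ∀ j, (P i ∩ Aset d r j).ncard = if ι j = i then 0 else 1) ∧
    (∀ i, (P i).ncard = a i) := by
  classical
  obtain ⟨hcover, hdisj, p, hp⟩ := hTP
  have hXfin : (Xset d r ι).Finite := by
    apply Set.Finite.union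
    · exact Set.finite_range _
    · exact Set.finite_iUnion (fun j => by
        rw [← coe_Afin]; exact (Afin d r j).finite_toSet)
  have hPsub : ∀ i, P i ⊆ Xset d r ι := fun i => hcover ▸ Set.subset_iUnion P i
  have hPfin : ∀ i, (P i).Finite := fun i => hXfin.subset (hPsub i)
  set Q : Fin r → Finset (Fin d → ℝ) := fun i => (hPfin i).toFinset with hQdef
  have hQcoe : ∀ i, (↑(Q i) : Set (Fin d → ℝ)) = P i := fun i => (hPfin i).coe_toFinset
  have hQmem : ∀ i y, y ∈ Q i ↔ y ∈ P i := fun i y => (hPfin i).mem_toFinset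
  -- membership characterization
  have hchar : ∀ i, ∀ y ∈ P i, y = xpt d r ι i ∨ ∃ j, y ∈ Afin d r j := by
    intro i y hy
    rcases hPsub i hy with hyA | hyB
    · obtain ⟨i', rfl⟩ := hyA
      by_cases hii : i' = i
      · left; rw [hii]
      · exact absurd hy (Set.disjoint_left.mp (hdisj i' i hii) (hx i'))
    · right
      obtain ⟨j, hj⟩ := Set.mem_iUnion.1 hyB
      exact ⟨j, by rw [← coe_Afin] at hj; exact hj⟩
  -- p = 0
  have hlinj : ∀ j : Fin d, IsLinearMap ℝ (fun v : Fin d → ℝ => v j) :=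
    fun j => ⟨fun _ _ => rfl, fun _ _ => rfl⟩
  have hp0 : p = 0 := by
    funext j
    show p j = 0
    have hge : 0 ≤ p j := by
      have hsub : P (ι j) ⊆ {v : Fin d → ℝ | 0 ≤ v j} := by
        intro y hy
        rcases hchar (ι j) y hy with rfl | ⟨j', hj'⟩
        · show 0 ≤ xpt d r ι (ι j) j
          unfold xpt; rw [if_pos rfl]
        · exact Afin_apply_nonneg hj'
      exact convexHull_min hsub (convex_halfSpace_ge (hlinj j) 0) (hp (ι j))
    have hle0 : p j ≤ 0 := by
      have hex : ∃ i0, ∀ y ∈ P i0, y ∉ Afin d r j := by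
        by_contra hcon
        push_neg at hcon
        choose f hf1 hf2 using hcon
        have hinj : Set.InjOn f ↑(Finset.univ : Finset (Fin r)) := by
          intro i _ i' _ h
          by_contra hne
          exact Set.disjoint_left.mp (hdisj i i' hne) (hf1 i) (h ▸ hf1 i')
        have hcard := Finset.card_le_card_of_injOn f (fun i _ => hf2 i) hinj
        rw [Finset.card_univ, Fintype.card_fin, card_Afin] at hcard
        omega
      obtain ⟨i0, hi0⟩ := hex
      have hsub : P i0 ⊆ {v : Fin d → ℝ | v j ≤ 0} := by
        intro y hy
        rcases hchar i0 y hy with rfl | ⟨j', hj'⟩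
        · exact xpt_nonpos d r ι i0 j
        · by_cases hjj : j = j'
          · exact absurd (hjj ▸ hj') (hi0 y hy)
          · show y j ≤ 0
            rw [Afin_apply_ne hj' hjj]
      exact convexHull_min hsub (convex_halfSpace_le (hlinj j) 0) (hp i0)
    linarith
  -- main nonemptiness claim
  have hmain : ∀ i j, ι j ≠ i → ∃ y, y ∈ Q i ∩ Afin d r j := by
    intro i j hj
    have hpQ : (0 : Fin d → ℝ) ∈ convexHull ℝ (↑(Q i) : Set (Fin d → ℝ)) := by
      rw [hQcoe]; exact hp0 ▸ hp i
    rw [Finset.convexHull_eq] at hpQ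
    obtain ⟨w, hw0, hw1, hwc⟩ := hpQ
    rw [Finset.centerMass_eq_of_sum_1 _ _ hw1] at hwc
    have hcoord : ∀ j', ∑ y ∈ Q i, w y * y j' = 0 := by
      intro j'
      have h := congrFun hwc j'
      simpa [Finset.sum_apply] using h
    have hxQ : xpt d r ι i ∈ Q i := (hQmem i _).2 (hx i)
    set t := w (xpt d r ι i) with htdef
    have ht0 : 0 ≤ t := hw0 _ hxQ
    have hterm : ∀ (j' : Fin d), ∀ y ∈ Q i, y ≠ xpt d r ι i → 0 ≤ w y * y j' := by
      intro j' y hyQ hyne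
      rcases hchar i y ((hQmem i y).1 hyQ) with h | ⟨j'', hj''⟩
      · exact absurd h hyne
      · exact mul_nonneg (hw0 y hyQ) (Afin_apply_nonneg hj'')
    have htpos : 0 < t := by
      rcases ht0.lt_or_eq with h | h
      · exact h
      · exfalso
        have hzero : ∀ y ∈ Q i, w y = 0 := by
          intro y hyQ
          rcases hchar i y ((hQmem i y).1 hyQ) with hxy | ⟨j'', hj''⟩
          · rw [hxy, ← htdef, ← h]
          · have hnn : ∀ z ∈ Q i, 0 ≤ w z * z j'' := by
              intro z hzQ
              by_cases hz : z = xpt d r ι i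
              · rw [hz, ← htdef, ← h, zero_mul]
              · exact hterm j'' z hzQ hz
            have := (Finset.sum_eq_zero_iff_of_nonneg hnn).1 (hcoord j'') y hyQ
            have h1 : (1:ℝ) ≤ y j'' := Afin_apply_self hj''
            nlinarith [hw0 y hyQ]
        have : (1:ℝ) = 0 := by rw [← hw1]; exact Finset.sum_eq_zero hzero
        norm_num at this
    have hsplit := Finset.add_sum_erase (Q i) (fun y => w y * y j) hxQ
    have hxj : xpt d r ι i j = -((i:ℕ)+1) := if_neg hj
    simp only [hcoord j, hxj] at hsplit
    have hpossum : 0 < ∑ y ∈ (Q i).erase (xpt d r ι i), w y * y j := by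
      have hc : (0:ℝ) < (i:ℕ) + 1 := by positivity
      nlinarith [hsplit, mul_pos htpos hc]
    obtain ⟨y, hyE, hypos⟩ := Finset.exists_lt_of_sum_lt
      (f := fun _ => (0:ℝ)) (g := fun y => w y * y j)
      (s := (Q i).erase (xpt d r ι i)) (by simpa using hpossum)
    have hyQ : y ∈ Q i := Finset.mem_of_mem_erase hyE
    have hyne : y ≠ xpt d r ι i := Finset.ne_of_mem_erase hyE
    have hyj : 0 < y j := by
      by_contra hle'
      push_neg at hle'
      nlinarith [hw0 y hyQ]
    rcases hchar i y ((hQmem i y).1 hyQ) with h | ⟨j'', hj''⟩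
    · exact absurd h hyne
    · have : j = j'' := by
        by_contra hne
        rw [Afin_apply_ne hj'' hne] at hyj
        exact lt_irrefl 0 hyj
      exact ⟨y, Finset.mem_inter.2 ⟨hyQ, this ▸ hj''⟩⟩
  -- counting per coordinate j
  have hcard1 : ∀ i j, (Q i ∩ Afin d r j).card = if ι j = i then 0 else 1 := by
    intro i j
    set c : Fin r → ℕ := fun i' => (Q i' ∩ Afin d r j).card with hcdef
    have hsum_c : ∑ i', c i' = r - 1 := by
      have hbU : Afin d r j = Finset.univ.biUnion (fun i' => Q i' ∩ Afin d r j) := by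
        ext y
        simp only [Finset.mem_biUnion, Finset.mem_inter, Finset.mem_univ, true_and]
        constructor
        · intro hy
          have hyX : y ∈ Xset d r ι :=
            Or.inr (Set.mem_iUnion.2 ⟨j, by rw [← coe_Afin]; exact hy⟩)
          rw [← hcover] at hyX
          obtain ⟨i', hi'⟩ := Set.mem_iUnion.1 hyX
          exact ⟨i', (hQmem i' y).2 hi', hy⟩
        · rintro ⟨i', _, hy⟩; exact hy
      have hdisj' : ∀ i1 ∈ Finset.univ, ∀ i2 ∈ Finset.univ, i1 ≠ i2 →
          Disjoint (Q i1 ∩ Afin d r j) (Q i2 ∩ Afin d r j) := by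
        intro i1 _ i2 _ hne
        rw [Finset.disjoint_left]
        intro y hy1 hy2
        exact Set.disjoint_left.mp (hdisj i1 i2 hne)
          ((hQmem i1 y).1 (Finset.mem_inter.1 hy1).1)
          ((hQmem i2 y).1 (Finset.mem_inter.1 hy2).1)
      calc ∑ i', c i' = (Finset.univ.biUnion (fun i' => Q i' ∩ Afin d r j)).card :=
            (Finset.card_biUnion hdisj').symm
        _ = (Afin d r j).card := by rw [← hbU]
        _ = r - 1 := card_Afin d r j
    have hone : ∀ i' ∈ Finset.univ.erase (ι j), 1 ≤ c i' := by
      intro i' hi'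
      have hne : ι j ≠ i' := fun h => (Finset.mem_erase.1 hi').1 h.symm
      obtain ⟨y, hy⟩ := hmain i' j hne
      exact Finset.card_pos.2 ⟨y, hy⟩
    have hsplit := Finset.add_sum_erase Finset.univ c (Finset.mem_univ (ι j))
    rw [hsum_c] at hsplit
    have hcerase : (Finset.univ.erase (ι j)).card = r - 1 := by
      rw [Finset.card_erase_of_mem (Finset.mem_univ _), Finset.card_univ, Fintype.card_fin]
    have hgesum : r - 1 ≤ ∑ i' ∈ Finset.univ.erase (ι j), c i' := by
      calc r - 1 = ∑ _i' ∈ Finset.univ.erase (ι j), 1 := by rw [Finset.sum_const, hcerase, smul_eq_mul, mul_one]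
        _ ≤ ∑ i' ∈ Finset.univ.erase (ι j), c i' := Finset.sum_le_sum hone
    have hc0 : c (ι j) = 0 := by omega
    have hsum_erase : ∑ i' ∈ Finset.univ.erase (ι j), c i' = r - 1 := by omega
    by_cases hij : ι j = i
    · rw [if_pos hij, ← hij]; exact hc0
    · rw [if_neg hij]
      have hieq : ∀ i' ∈ Finset.univ.erase (ι j), 1 = c i' := by
        apply (Finset.sum_eq_sum_iff_of_le hone).1
        rw [hsum_erase, Finset.sum_const, hcerase, smul_eq_mul, mul_one]
      exact (hieq i (Finset.mem_erase.2 ⟨fun h => hij h.symm, Finset.mem_univ i⟩)).symm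
  have hinterco : ∀ i j, P i ∩ Aset d r j = ↑(Q i ∩ Afin d r j) := by
    intro i j
    rw [Finset.coe_inter, hQcoe, coe_Afin]
  constructor
  · intro i j
    rw [hinterco, Set.ncard_coe_finset, hcard1]
  · intro i
    have hxQ2 : xpt d r ι i ∈ Q i := (hQmem i _).2 (hx i)
    have hQeq : Q i = insert (xpt d r ι i)
        (Finset.univ.biUnion (fun j => Q i ∩ Afin d r j)) := by
      ext y
      simp only [Finset.mem_insert, Finset.mem_biUnion, Finset.mem_inter,
        Finset.mem_univ, true_and]
      constructor
      · intro hy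
        rcases hchar i y ((hQmem i y).1 hy) with h | ⟨j', hj'⟩
        · exact Or.inl h
        · exact Or.inr ⟨j', hy, hj'⟩
      · rintro (rfl | ⟨j', hy, _⟩)
        · exact hxQ2
        · exact hy
    have hnotmem : xpt d r ι i ∉ Finset.univ.biUnion (fun j => Q i ∩ Afin d r j) := by
      simp only [Finset.mem_biUnion, Finset.mem_inter, Finset.mem_univ, true_and]
      rintro ⟨j', _, hj'⟩
      have h1 := Afin_apply_self hj'
      have h2 := xpt_nonpos d r ι i j'
      linarith
    have hbUdisj : ∀ j1 ∈ Finset.univ, ∀ j2 ∈ Finset.univ, j1 ≠ j2 →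
        Disjoint (Q i ∩ Afin d r j1) (Q i ∩ Afin d r j2) := by
      intro j1 _ j2 _ hne
      rw [Finset.disjoint_left]
      intro y h1 h2
      obtain ⟨k, hk1, _, rfl⟩ := mem_Afin.1 (Finset.mem_inter.1 h1).2
      obtain ⟨k', hk1', _, heq⟩ := mem_Afin.1 (Finset.mem_inter.1 h2).2
      exact hne (sv_inj hk1 heq).2
    have hfil : (Finset.univ.filter (fun j => ¬ ι j = i)).card = a i - 1 := by
      have h2 := Finset.card_filter_add_card_filter_not
        (s := (Finset.univ : Finset (Fin d))) (p := fun j => ι j = i)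
      rw [hι i, Finset.card_univ, Fintype.card_fin] at h2
      have := hle i
      have := hpos i
      omega
    have hcardQ : (Q i).card = (a i - 1) + 1 := by
      rw [hQeq, Finset.card_insert_of_notMem hnotmem, Finset.card_biUnion hbUdisj]
      congr 1
      have hs : ∑ j, (Q i ∩ Afin d r j).card = ∑ j, (if ι j = i then 0 else 1) :=
        Finset.sum_congr rfl fun j _ => hcard1 i j
      rw [hs, Finset.sum_ite, Finset.sum_const_zero, zero_add, Finset.sum_const,
        smul_eq_mul, mul_one, hfil]
    rw [← hQcoe i, Set.ncard_coe_finset, hcardQ]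
    have := hpos i
    omega
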